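/- arXiv:1703.08641 — 2 statements merged into one kernel-verified Lean document; each statement's English description precedes it below -/
import Mathlib

section
/- Define, for 0 ≤ k ≤ n, U_k = {(ξ, η, v) ∈ M_{n,p}(ℂ) ⊕ M_{q,n}(ℂ) ⊕ M_n(ℂ) : ξ_{ij} = 0 for i > k, η_{i'j'} = 0 for j' ≤ k, v strictly upper triangular}. Then U_k is a linear subspace of dimension (n² − n)/2 + pk + q(n − k), and every element of U_k lies in the null cone: for each w ∈ U_k, the closure of the GL_n-orbit of w contains 0; equivalently, all the invariants trace(A^m) (m ≥ 1) and C A^m B (m ≥ 0) vanish on U_k. -/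
open Matrix

/-- Membership in the maximal unstable subspace U_k. -/
def inU (n p q k : ℕ) (ξ : Matrix (Fin n) (Fin p) ℂ) (η : Matrix (Fin q) (Fin n) ℂ)
    (v : Matrix (Fin n) (Fin n) ℂ) : Prop :=
  (∀ i : Fin n, k ≤ (i : ℕ) → ∀ j, ξ i j = 0) ∧
  (∀ i, ∀ j : Fin n, (j : ℕ) < k → η i j = 0) ∧
  (∀ i j : Fin n, (j : ℕ) ≤ (i : ℕ) → v i j = 0)

section Aux

variable {ι κ : Type*}

/-- Submodule of matrices supported on a set `S` of positions. -/
noncomputable def suppSubmodule (S : Set (ι × κ)) : Submodule ℂ (Matrix ι κ ℂ) where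
  carrier := {A | ∀ i j, (i, j) ∉ S → A i j = 0}
  add_mem' := by
    intro A B hA hB i j h
    simp [Matrix.add_apply, hA i j h, hB i j h]
  zero_mem' := fun i j _ => rfl
  smul_mem' := by
    intro c A hA i j h
    simp [Matrix.smul_apply, hA i j h]

lemma mem_suppSubmodule {S : Set (ι × κ)} {A : Matrix ι κ ℂ} :
    A ∈ suppSubmodule S ↔ ∀ i j, (i, j) ∉ S → A i j = 0 := Iff.rfl

noncomputable def suppEquiv (S : Set (ι × κ)) [DecidablePred (· ∈ S)] :
    suppSubmodule S ≃ₗ[ℂ] (S → ℂ) where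
  toFun A s := A.1 s.1.1 s.1.2
  invFun g := ⟨fun i j => if h : (i, j) ∈ S then g ⟨(i, j), h⟩ else 0,
    fun i j h => dif_neg h⟩
  left_inv := by
    intro A
    ext i j
    by_cases h : (i, j) ∈ S
    · simp [h]
    · simp [h, A.2 i j h]
  right_inv := by
    intro g
    funext s
    simp
  map_add' := by intro A B; rfl
  map_smul' := by intro c A; rfl

lemma finrank_suppSubmodule [Fintype ι] [Fintype κ] (S : Set (ι × κ))
    [DecidablePred (· ∈ S)] [Fintype S] :
    Module.finrank ℂ (suppSubmodule S) = Fintype.card S := by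
  rw [(suppEquiv S).finrank_eq, Module.finrank_fintype_fun_eq_card]

/-- A product of submodules is linearly equivalent to the product of the subtypes. -/
def prodEquivAux {M N : Type*} [AddCommGroup M] [AddCommGroup N] [Module ℂ M] [Module ℂ N]
    (p : Submodule ℂ M) (q : Submodule ℂ N) : (p.prod q) ≃ₗ[ℂ] p × q where
  toFun x := (⟨x.1.1, x.2.1⟩, ⟨x.1.2, x.2.2⟩)
  invFun x := ⟨(x.1.1, x.2.1), ⟨x.1.2, x.2.2⟩⟩
  left_inv := fun x => rfl
  right_inv := fun x => rfl
  map_add' := fun x y => rfl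
  map_smul' := fun c x => rfl

end Aux

/-- U_k is a linear subspace of dimension (n²-n)/2 + pk + q(n-k), and all the
fundamental invariants vanish on it (so U_k is contained in the null cone). -/
theorem stmt11 (n p q k : ℕ) (hk : k ≤ n) :
    (∃ U : Submodule ℂ (Matrix (Fin n) (Fin p) ℂ × Matrix (Fin q) (Fin n) ℂ ×
        Matrix (Fin n) (Fin n) ℂ),
      (↑U = {w : Matrix (Fin n) (Fin p) ℂ × Matrix (Fin q) (Fin n) ℂ ×
          Matrix (Fin n) (Fin n) ℂ | inU n p q k w.1 w.2.1 w.2.2}) ∧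
      Module.finrank ℂ U = (n ^ 2 - n) / 2 + p * k + q * (n - k)) ∧
    (∀ ξ η v, inU n p q k ξ η v →
      (∀ m : ℕ, 1 ≤ m → Matrix.trace (v ^ m) = 0) ∧ (∀ m : ℕ, η * v ^ m * ξ = 0)) := by
  constructor
  · -- the subspace and its dimension
    set S1 : Set (Fin n × Fin p) := {ij | (ij.1 : ℕ) < k} with hS1
    set S2 : Set (Fin q × Fin n) := {ij | k ≤ (ij.2 : ℕ)} with hS2
    set S3 : Set (Fin n × Fin n) := {ij | (ij.1 : ℕ) < (ij.2 : ℕ)} with hS3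
    refine ⟨(suppSubmodule S1).prod ((suppSubmodule S2).prod (suppSubmodule S3)), ?_, ?_⟩
    · ext w
      simp only [Submodule.mem_prod, Set.mem_prod, SetLike.mem_coe, mem_suppSubmodule,
        Set.mem_setOf_eq, inU, hS1, hS2, hS3]
      constructor
      · rintro ⟨h1, h2, h3⟩
        exact ⟨fun i hi j => h1 i j (by simpa using not_lt.mpr hi),
          fun i j hj => h2 i j (by simpa using not_le.mpr hj),
          fun i j hj => h3 i j (by simpa using not_lt.mpr hj)⟩
      · rintro ⟨h1, h2, h3⟩
        exact ⟨fun i j h => h1 i (by simpa using h) j,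
          fun i j h => h2 i j (by simpa using h),
          fun i j h => h3 i j (by simpa using h)⟩
    · have e1 : S1 ≃ Fin k × Fin p :=
        { toFun := fun s => (⟨(s.1.1 : ℕ), s.2⟩, s.1.2)
          invFun := fun x => ⟨(⟨(x.1 : ℕ), lt_of_lt_of_le x.1.2 hk⟩, x.2), x.1.2⟩
          left_inv := fun s => by ext <;> simp
          right_inv := fun x => by ext <;> simp }
      have e2 : S2 ≃ Fin q × Fin (n - k) :=
        { toFun := fun s => (s.1.1, ⟨(s.1.2 : ℕ) - k, by
            have h1' : k ≤ ((s : Fin q × Fin n).2 : ℕ) := s.2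
            have := s.1.2.2; omega⟩)
          invFun := fun x => ⟨(x.1, ⟨(x.2 : ℕ) + k, by have := x.2.2; omega⟩), by
            show k ≤ _; simp⟩
          left_inv := fun s => by
            have h1' : k ≤ ((s : Fin q × Fin n).2 : ℕ) := s.2
            ext <;> simp <;> omega
          right_inv := fun x => by ext <;> simp }
      have e3 : S3 ≃ Σ j : Fin n, Fin (j : ℕ) :=
        { toFun := fun s => ⟨s.1.2, ⟨(s.1.1 : ℕ), s.2⟩⟩
          invFun := fun x => ⟨(⟨(x.2 : ℕ), lt_trans x.2.2 x.1.2⟩, x.1), x.2.2⟩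
          left_inv := fun s => by ext <;> simp
          right_inv := fun x => by ext <;> simp }
      have c1 : Fintype.card S1 = k * p := by
        rw [Fintype.card_congr e1]; simp
      have c2 : Fintype.card S2 = q * (n - k) := by
        rw [Fintype.card_congr e2]; simp
      have c3 : Fintype.card S3 = (n ^ 2 - n) / 2 := by
        rw [Fintype.card_congr e3, Fintype.card_sigma]
        simp only [Fintype.card_fin]
        rw [Fin.sum_univ_eq_sum_range (fun i => i), Finset.sum_range_id]
        congr 1
        cases n with
        | zero => rfl
        | succ m =>
          have h : (m + 1) ^ 2 = (m + 1) * m + (m + 1) := by ring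
          rw [h]; simp
      rw [(prodEquivAux (suppSubmodule S1) ((suppSubmodule S2).prod (suppSubmodule S3))).finrank_eq,
        Module.finrank_prod,
        (prodEquivAux (suppSubmodule S2) (suppSubmodule S3)).finrank_eq, Module.finrank_prod,
        finrank_suppSubmodule, finrank_suppSubmodule, finrank_suppSubmodule,
        c1, c2, c3]
      ring
  · -- invariants vanish
    rintro ξ η v ⟨h1, h2, h3⟩
    -- key entrywise bounds on powers of v
    have pow_lt : ∀ m : ℕ, ∀ i j : Fin n, (j : ℕ) < (i : ℕ) → (v ^ m) i j = 0 := by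
      intro m
      induction m with
      | zero => intro i j hij; simp [Matrix.one_apply, Fin.ext_iff]; omega
      | succ m ih =>
        intro i j hij
        rw [pow_succ, Matrix.mul_apply]
        apply Finset.sum_eq_zero
        intro l _
        by_cases hl : (l : ℕ) < (i : ℕ)
        · rw [ih i l hl, zero_mul]
        · rw [h3 l j (by omega), mul_zero]
    have pow_le : ∀ m : ℕ, 1 ≤ m → ∀ i j : Fin n, (j : ℕ) ≤ (i : ℕ) → (v ^ m) i j = 0 := by
      intro m hm i j hij
      obtain ⟨m', rfl⟩ : ∃ m', m = m' + 1 := ⟨m - 1, by omega⟩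
      rw [pow_succ, Matrix.mul_apply]
      apply Finset.sum_eq_zero
      intro l _
      by_cases hl : (l : ℕ) < (i : ℕ)
      · rw [pow_lt m' i l hl, zero_mul]
      · rw [h3 l j (by omega), mul_zero]
    constructor
    · intro m hm
      rw [Matrix.trace]
      apply Finset.sum_eq_zero
      intro i _
      exact pow_le m hm i i le_rfl
    · intro m
      have key : ∀ a : Fin q, ∀ j : Fin n, (j : ℕ) < k → (η * v ^ m) a j = 0 := by
        intro a j hj
        rw [Matrix.mul_apply]
        apply Finset.sum_eq_zero
        intro i _
        by_cases hi : (i : ℕ) < k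
        · rw [h2 a i hi, zero_mul]
        · rw [pow_lt m i j (by omega), mul_zero]
      ext a b
      rw [Matrix.mul_apply, Matrix.zero_apply]
      apply Finset.sum_eq_zero
      intro j _
      by_cases hj : (j : ℕ) < k
      · rw [key a j hj, zero_mul]
      · rw [h1 j (by omega) b, mul_zero]
end

section
/- Let S_n act diagonally on ℂ^n × V^n (V a nonzero finite-dimensional ℂ-vector space) by permuting coordinates, and define ψ(a_1,…,a_n; v_1,…,v_n) = ((Σ_i a_i^k)_{k=1}^n ; (Σ_i a_i^k v_i)_{k=1}^n). Fix a nonzero u ∈ V and let Z = {(a; v) : a_i v_i = u for all i}. Then Z is Zariski-closed and S_n-stable, the image ψ(Z) contains no point of the form (0; w), but the closure of ψ(Z) contains the point (0; (n·u, 0, …, 0)). Hence ψ(Z) is not closed. -/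
open Matrix

lemma aux_psum_eval {n : ℕ} (a : Fin n → ℂ) (j : ℕ) :
    MvPolynomial.aeval a (MvPolynomial.psum (Fin n) ℂ j) = ∑ i, a i ^ j := by
  simp [MvPolynomial.psum]

lemma aux_esymm_zero {n : ℕ} (a : Fin n → ℂ)
    (hp : ∀ k, 0 < k → k ≤ n → ∑ i, a i ^ k = 0) :
    ∀ k, 0 < k → k ≤ n → MvPolynomial.aeval a (MvPolynomial.esymm (Fin n) ℂ k) = 0 := by
  intro k hk hkn
  have h := congrArg (MvPolynomial.aeval a) (MvPolynomial.mul_esymm_eq_sum (Fin n) ℂ k)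
  simp only [_root_.map_mul, map_sum, _root_.map_pow, _root_.map_neg, _root_.map_one, map_natCast] at h
  have hz : ∑ p ∈ (Finset.HasAntidiagonal.antidiagonal k).filter (fun p => p.1 < k),
      (-1 : ℂ) ^ p.1 * MvPolynomial.aeval a (MvPolynomial.esymm (Fin n) ℂ p.1) *
        MvPolynomial.aeval a (MvPolynomial.psum (Fin n) ℂ p.2) = 0 := by
    refine Finset.sum_eq_zero fun p hpmem => ?_
    simp only [Finset.mem_filter, Finset.HasAntidiagonal.mem_antidiagonal] at hpmem
    have h2 : 0 < p.2 := by omega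
    have h2n : p.2 ≤ n := by omega
    rw [aux_psum_eval, hp p.2 h2 h2n, mul_zero]
  rw [hz, mul_zero] at h
  have hk' : (k : ℂ) ≠ 0 := Nat.cast_ne_zero.mpr hk.ne'
  exact (mul_eq_zero.mp h).resolve_left hk'

lemma aux_all_zero {n : ℕ} (a : Fin n → ℂ)
    (hp : ∀ k, 0 < k → k ≤ n → ∑ i, a i ^ k = 0) (i : Fin n) : a i = 0 := by
  classical
  set s : Multiset ℂ := Finset.univ.val.map a with hs
  have hcard : Multiset.card s = n := by simp [hs]
  have hesymm : ∀ m, 0 < m → m ≤ n → s.esymm m = 0 := by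
    intro m h1 h2
    rw [hs, ← MvPolynomial.aeval_esymm_eq_multiset_esymm (Fin n) ℂ m a]
    exact aux_esymm_zero a hp m h1 h2
  set P : Polynomial ℂ := (s.map (fun t => Polynomial.X - Polynomial.C t)).prod with hPdef
  have hPprod : P = ∏ j : Fin n, (Polynomial.X - Polynomial.C (a j)) := by
    rw [Finset.prod_eq_multiset_prod, hPdef, hs, Multiset.map_map]
    rfl
  have hmonic : P.Monic := by
    rw [hPprod]
    exact Polynomial.monic_prod_of_monic _ _ fun j _ => Polynomial.monic_X_sub_C (a j)
  have hdeg : P.natDegree = n := by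
    rw [hPprod,
      Polynomial.natDegree_prod_of_monic _ _ fun j _ => Polynomial.monic_X_sub_C (a j)]
    simp
  have hPX : P = Polynomial.X ^ n := by
    ext k
    rw [Polynomial.coeff_X_pow]
    rcases lt_trichotomy k n with h | h | h
    · rw [if_neg h.ne]
      have hk : k ≤ Multiset.card s := by omega
      rw [hPdef, Multiset.prod_X_sub_C_coeff s hk, hcard,
        hesymm (n - k) (by omega) (by omega), mul_zero]
    · rw [if_pos h, h]
      have := hmonic.coeff_natDegree
      rwa [hdeg] at this
    · rw [if_neg h.ne']
      exact Polynomial.coeff_eq_zero_of_natDegree_lt (by omega)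
  have heval : Polynomial.eval (a i) P = 0 := by
    rw [hPprod, Polynomial.eval_prod]
    exact Finset.prod_eq_zero (Finset.mem_univ i) (by simp)
  rw [hPX] at heval
  simp only [Polynomial.eval_pow, Polynomial.eval_X] at heval
  exact pow_eq_zero_iff i.pos.ne' |>.mp heval

/-- A toy model: the image of the closed S_n-stable set Z under ψ is not closed. -/
theorem stmt17 (n d : ℕ) (hn : 0 < n) (u : Fin d → ℂ) (hu : u ≠ 0)
    (ψ : (Fin n → ℂ) × (Fin n → Fin d → ℂ) → (Fin n → ℂ) × (Fin n → Fin d → ℂ))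
    (hψ : ψ = fun av => (fun k : Fin n => ∑ i : Fin n, av.1 i ^ ((k : ℕ) + 1),
        fun k : Fin n => ∑ i : Fin n, av.1 i ^ ((k : ℕ) + 1) • av.2 i))
    (Z : Set ((Fin n → ℂ) × (Fin n → Fin d → ℂ)))
    (hZ : Z = {av | ∀ i : Fin n, av.1 i • av.2 i = u}) :
    IsClosed Z ∧
    (∀ σ : Equiv.Perm (Fin n), ∀ av ∈ Z,
      ((fun i => av.1 (σ i), fun i => av.2 (σ i)) :
        (Fin n → ℂ) × (Fin n → Fin d → ℂ)) ∈ Z) ∧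
    (∀ av ∈ Z, (ψ av).1 ≠ 0) ∧
    ((0, fun k : Fin n => if k = (⟨0, hn⟩ : Fin n) then (n : ℂ) • u else 0)
        ∈ closure (ψ '' Z)) ∧
    ¬ IsClosed (ψ '' Z) := by
  -- Part 1 : Z is closed
  have part1 : IsClosed Z := by
    rw [hZ]
    have : {av : (Fin n → ℂ) × (Fin n → Fin d → ℂ) | ∀ i : Fin n, av.1 i • av.2 i = u}
        = ⋂ i : Fin n, {av | av.1 i • av.2 i = u} := by
      ext av; simp
    rw [this]
    refine isClosed_iInter fun i => isClosed_eq ?_ continuous_const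
    exact ((continuous_apply i).comp continuous_fst).smul
      ((continuous_apply i).comp continuous_snd)
  -- Part 2 : S_n stability
  have part2 : ∀ σ : Equiv.Perm (Fin n), ∀ av ∈ Z,
      ((fun i => av.1 (σ i), fun i => av.2 (σ i)) :
        (Fin n → ℂ) × (Fin n → Fin d → ℂ)) ∈ Z := by
    rw [hZ]
    intro σ av hav i
    exact hav (σ i)
  -- Part 3 : no point of ψ(Z) has zero first component
  have part3 : ∀ av ∈ Z, (ψ av).1 ≠ 0 := by
    intro av hav hzero
    rw [hψ] at hzero
    have hp : ∀ k, 0 < k → k ≤ n → ∑ i, av.1 i ^ k = 0 := by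
      intro k hk hkn
      have := congrFun hzero ⟨k - 1, by omega⟩
      simpa [Nat.sub_add_cancel hk] using this
    have h0 : av.1 ⟨0, hn⟩ = 0 := aux_all_zero av.1 hp ⟨0, hn⟩
    rw [hZ] at hav
    have := hav ⟨0, hn⟩
    rw [h0, zero_smul] at this
    exact hu this.symm
  -- Part 4 : the limit point is in the closure
  have part4 : ((0, fun k : Fin n => if k = (⟨0, hn⟩ : Fin n) then (n : ℂ) • u else 0)
      : (Fin n → ℂ) × (Fin n → Fin d → ℂ)) ∈ closure (ψ '' Z) := by
    set ζ : ℂ := Complex.exp (2 * Real.pi * Complex.I / n) with hζ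
    have hprim : IsPrimitiveRoot ζ n := Complex.isPrimitiveRoot_exp n hn.ne'
    have hζ0 : ζ ≠ 0 := Complex.exp_ne_zero _
    have hsum : ∀ m : ℕ, 0 < m → m < n → ∑ i : Fin n, (ζ ^ (i : ℕ)) ^ m = 0 := by
      intro m h1 h2
      have hne : ζ ^ m ≠ 1 := hprim.pow_ne_one_of_pos_of_lt h1.ne' h2
      have h1' : ∑ i : Fin n, (ζ ^ m) ^ (i : ℕ) = 0 := by
        rw [Fin.sum_univ_eq_sum_range (fun i => (ζ ^ m) ^ i) n, geom_sum_eq hne]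
        have hpow : (ζ ^ m) ^ n = 1 := by
          rw [← pow_mul, mul_comm, pow_mul, hprim.pow_eq_one, one_pow]
        rw [hpow, sub_self, zero_div]
      calc ∑ i : Fin n, (ζ ^ (i : ℕ)) ^ m = ∑ i : Fin n, (ζ ^ m) ^ (i : ℕ) := by
            refine Finset.sum_congr rfl fun i _ => ?_
            rw [← pow_mul, ← pow_mul, Nat.mul_comm]
        _ = 0 := h1'
    set t : ℕ → ℂ := fun m => ((1 / ((m : ℝ) + 1) : ℝ) : ℂ) with ht
    have ht0 : ∀ m, t m ≠ 0 := by
      intro m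
      simp only [ht]
      rw [Complex.ofReal_ne_zero]
      positivity
    have htend : Filter.Tendsto t Filter.atTop (nhds 0) := by
      rw [show (0 : ℂ) = ((0 : ℝ) : ℂ) by simp]
      exact (Complex.continuous_ofReal.tendsto 0).comp
        tendsto_one_div_add_atTop_nhds_zero_nat
    set z : ℕ → (Fin n → ℂ) × (Fin n → Fin d → ℂ) :=
      fun m => (fun i => t m * ζ ^ (i : ℕ), fun i => (t m * ζ ^ (i : ℕ))⁻¹ • u) with hzdef
    have hne : ∀ m, ∀ i : Fin n, t m * ζ ^ (i : ℕ) ≠ 0 :=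
      fun m i => mul_ne_zero (ht0 m) (pow_ne_zero _ hζ0)
    have hzZ : ∀ m, z m ∈ Z := by
      rw [hZ]
      intro m i
      show (t m * ζ ^ (i : ℕ)) • ((t m * ζ ^ (i : ℕ))⁻¹ • u) = u
      rw [smul_smul, mul_inv_cancel₀ (hne m i), one_smul]
    have hψ2 : ∀ m, (ψ (z m)).2
        = fun k : Fin n => if k = (⟨0, hn⟩ : Fin n) then (n : ℂ) • u else 0 := by
      intro m
      rw [hψ]
      funext k
      show (∑ i : Fin n, (t m * ζ ^ (i : ℕ)) ^ ((k : ℕ) + 1) •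
          ((t m * ζ ^ (i : ℕ))⁻¹ • u)) = _
      have hx : ∀ i : Fin n, (t m * ζ ^ (i : ℕ)) ^ ((k : ℕ) + 1) •
          ((t m * ζ ^ (i : ℕ))⁻¹ • u) = ((t m * ζ ^ (i : ℕ)) ^ (k : ℕ)) • u := by
        intro i
        rw [smul_smul, pow_succ, mul_assoc, mul_inv_cancel₀ (hne m i), mul_one]
      rw [Finset.sum_congr rfl fun i _ => hx i, ← Finset.sum_smul]
      by_cases hk : k = (⟨0, hn⟩ : Fin n)
      · rw [if_pos hk, hk]
        simp
      · rw [if_neg hk]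
        have hkpos : 0 < (k : ℕ) :=
          Nat.pos_of_ne_zero fun h => hk (Fin.ext h)
        have hz0 : ∑ i : Fin n, (t m * ζ ^ (i : ℕ)) ^ (k : ℕ) = 0 := by
          simp_rw [mul_pow, ← Finset.mul_sum]
          rw [hsum (k : ℕ) hkpos k.isLt, mul_zero]
        rw [hz0, zero_smul]
    have hψ1 : ∀ m, (ψ (z m)).1
        = fun k : Fin n => (t m) ^ ((k : ℕ) + 1) * ∑ i : Fin n, (ζ ^ (i : ℕ)) ^ ((k : ℕ) + 1) := by
      intro m
      rw [hψ]
      funext k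
      show (∑ i : Fin n, (t m * ζ ^ (i : ℕ)) ^ ((k : ℕ) + 1)) = _
      simp_rw [mul_pow, ← Finset.mul_sum]
    have hfun : (fun m => ψ (z m))
        = fun m => (((fun k : Fin n => (t m) ^ ((k : ℕ) + 1) *
              ∑ i : Fin n, (ζ ^ (i : ℕ)) ^ ((k : ℕ) + 1)) : Fin n → ℂ),
            (fun k : Fin n => if k = (⟨0, hn⟩ : Fin n) then (n : ℂ) • u else 0)) := by
      funext m
      exact Prod.ext (hψ1 m) (hψ2 m)
    have htendψ : Filter.Tendsto (fun m => ψ (z m)) Filter.atTop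
        (nhds ((0, fun k : Fin n => if k = (⟨0, hn⟩ : Fin n) then (n : ℂ) • u else 0))) := by
      rw [hfun]
      refine Filter.Tendsto.prodMk_nhds ?_ tendsto_const_nhds
      rw [tendsto_pi_nhds]
      intro k
      have := (htend.pow ((k : ℕ) + 1)).mul_const
        (∑ i : Fin n, (ζ ^ (i : ℕ)) ^ ((k : ℕ) + 1))
      simpa using this
    exact mem_closure_of_tendsto htendψ
      (Filter.Eventually.of_forall fun m => Set.mem_image_of_mem ψ (hzZ m))
  refine ⟨part1, part2, part3, part4, ?_⟩
  intro hc
  obtain ⟨av, havZ, heq⟩ := hc.closure_subset part4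
  exact part3 av havZ (by rw [heq])
end
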